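/- Suppose that G has no proper subgroup of finite index. Then every G-prime ideal of R is a prime ideal of R. -/

import Mathlib

/-- An ideal (i.e. left ideal) of a not-necessarily-commutative ring is two-sided. -/
def IsTwoSidedI {R : Type*} [Ring R] (I : Ideal R) : Prop :=
  ∀ a ∈ I, ∀ r : R, a * r ∈ I

/-- A (two-sided) ideal `P` is prime: it is proper and `IJ ⊆ P` forces `I ⊆ P` or `J ⊆ P`
for all two-sided ideals `I`, `J`. -/
def IsPrimeTS {R : Type*} [Ring R] (P : Ideal R) : Prop :=
  IsTwoSidedI P ∧ P ≠ ⊤ ∧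
    ∀ I J : Ideal R, IsTwoSidedI I → IsTwoSidedI J →
      (∀ a ∈ I, ∀ b ∈ J, a * b ∈ P) → I ≤ P ∨ J ≤ P

/-- `J` is `X`-semiprime: an intersection of a collection of `X`-prime ideals. -/
def IsXSemiprime {R : Type*} [Ring R] (𝒳 : Set (Ideal R)) (J : Ideal R) : Prop :=
  ∃ T ⊆ 𝒳, J = sInf T


/-- The translate of an ideal under the ring automorphism given by a group element
(expressed as a preimage, which for a group action gives the same family of translates). -/
def gTrans {R : Type*} [Ring R] {G : Type*} [Group G] [MulSemiringAction G R]
    (g : G) (I : Ideal R) : Ideal R :=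
  Ideal.comap (MulSemiringAction.toRingHom G R g) I

/-- A `G`-ideal: a two-sided ideal stable under the action of `G`. -/
def IsGIdeal {R : Type*} [Ring R] (G : Type*) [Group G] [MulSemiringAction G R]
    (I : Ideal R) : Prop :=
  IsTwoSidedI I ∧ ∀ g : G, gTrans g I = I

/-- A `G`-prime ideal: a proper `G`-ideal `Q` with `IJ ⊆ Q → I ⊆ Q ∨ J ⊆ Q`
for all `G`-ideals `I`, `J`. -/
def IsGPrime {R : Type*} [Ring R] (G : Type*) [Group G] [MulSemiringAction G R]
    (Q : Ideal R) : Prop :=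
  IsGIdeal G Q ∧ Q ≠ ⊤ ∧
    ∀ I J : Ideal R, IsGIdeal G I → IsGIdeal G J →
      (∀ a ∈ I, ∀ b ∈ J, a * b ∈ Q) → I ≤ Q ∨ J ≤ Q

/-- `(I : G) = ⋂_{g ∈ G} g(I)`, the largest `G`-ideal contained in `I`. -/
noncomputable def resGIdeal {R : Type*} [Ring R] (G : Type*) [Group G] [MulSemiringAction G R]
    (I : Ideal R) : Ideal R :=
  ⨅ g : G, gTrans g I

section Aux

variable {R : Type*} [Ring R]

theorem top_twoSided : IsTwoSidedI (⊤ : Ideal R) := fun _ _ _ => trivial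

/-- Two-sided product of ideals. -/
def tmul (I J : Ideal R) : Ideal R :=
  Ideal.span {x | ∃ a ∈ I, ∃ b ∈ J, x = a * b}

theorem mem_tmul {I J : Ideal R} {a b : R} (ha : a ∈ I) (hb : b ∈ J) :
    a * b ∈ tmul I J := Ideal.subset_span ⟨a, ha, b, hb, rfl⟩

theorem tmul_le {I J A : Ideal R} :
    tmul I J ≤ A ↔ ∀ a ∈ I, ∀ b ∈ J, a * b ∈ A := by
  constructor
  · exact fun h a ha b hb => h (mem_tmul ha hb)
  · intro h
    refine Ideal.span_le.2 ?_
    rintro x ⟨a, ha, b, hb, rfl⟩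
    exact h a ha b hb

theorem tmul_mono {I I' J J' : Ideal R} (h1 : I ≤ I') (h2 : J ≤ J') :
    tmul I J ≤ tmul I' J' :=
  tmul_le.2 fun a ha b hb => mem_tmul (h1 ha) (h2 hb)

theorem tmul_twoSided {I J : Ideal R} (hJ : IsTwoSidedI J) :
    IsTwoSidedI (tmul I J) := by
  intro x hx r
  let K : Submodule R R :=
    { carrier := {y | y * r ∈ tmul I J}
      add_mem' := fun {a b} ha hb => by
        show (a + b) * r ∈ tmul I J
        rw [add_mul]; exact add_mem ha hb
      zero_mem' := by show (0 : R) * r ∈ tmul I J; rw [zero_mul]; exact zero_mem _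
      smul_mem' := fun c y hy => by
        show (c • y) * r ∈ tmul I J
        rw [smul_eq_mul, mul_assoc, ← smul_eq_mul]
        exact Submodule.smul_mem _ c hy }
  have hle : tmul I J ≤ K := by
    refine Ideal.span_le.2 ?_
    rintro x ⟨a, ha, b, hb, rfl⟩
    show (a * b) * r ∈ tmul I J
    rw [mul_assoc]
    exact mem_tmul ha (hJ b hb r)
  exact hle hx

theorem tmul_assoc_le {I J K : Ideal R} (hI : IsTwoSidedI I) :
    tmul I (tmul J K) ≤ tmul (tmul I J) K := by
  refine tmul_le.2 fun a ha x hx => ?_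
  let K' : Submodule R R :=
    { carrier := {y | ∀ a ∈ I, a * y ∈ tmul (tmul I J) K}
      add_mem' := fun {y z} hy hz a haI => by
        rw [mul_add]; exact add_mem (hy a haI) (hz a haI)
      zero_mem' := fun a haI => by rw [mul_zero]; exact zero_mem _
      smul_mem' := fun c y hy a haI => by
        rw [smul_eq_mul, ← mul_assoc]
        exact hy (a * c) (hI a haI c) }
  have hle : tmul J K ≤ K' := by
    refine Ideal.span_le.2 ?_
    rintro x ⟨b, hb, c, hc, rfl⟩
    intro a haI
    rw [← mul_assoc]
    exact mem_tmul (mem_tmul haI hb) hc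
  exact hle hx a ha

/-- Two-sided product of a list of ideals. -/
def listProd : List (Ideal R) → Ideal R
  | [] => ⊤
  | I :: L => tmul I (listProd L)

theorem listProd_twoSided : ∀ L : List (Ideal R), IsTwoSidedI (listProd L)
  | [] => top_twoSided
  | _ :: L => tmul_twoSided (listProd_twoSided L)

theorem le_tmul_top {J : Ideal R} : J ≤ tmul ⊤ J := fun b hb => by
  simpa using mem_tmul (show (1 : R) ∈ (⊤ : Ideal R) from trivial) hb

theorem listProd_append_le (L₁ L₂ : List (Ideal R)) (h : ∀ I ∈ L₁, IsTwoSidedI I) :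
    listProd (L₁ ++ L₂) ≤ tmul (listProd L₁) (listProd L₂) := by
  induction L₁ with
  | nil => simpa [listProd] using (le_tmul_top (J := listProd L₂))
  | cons I L₁ ih =>
    show tmul I (listProd (L₁ ++ L₂)) ≤ tmul (tmul I (listProd L₁)) (listProd L₂)
    calc tmul I (listProd (L₁ ++ L₂))
        ≤ tmul I (tmul (listProd L₁) (listProd L₂)) :=
          tmul_mono le_rfl (ih fun J hJ => h J (List.mem_cons_of_mem _ hJ))
      _ ≤ tmul (tmul I (listProd L₁)) (listProd L₂) :=
          tmul_assoc_le (h I (List.mem_cons_self))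

theorem listProd_le_listProd {L' L : List (Ideal R)} (h : List.Forall₂ (· ≤ ·) L' L) :
    listProd L' ≤ listProd L := by
  induction h with
  | nil => exact le_rfl
  | cons h _ ih => exact tmul_mono h ih

theorem exists_le_of_listProd_le {M : Ideal R} (hM : IsPrimeTS M) :
    ∀ L : List (Ideal R), (∀ I ∈ L, IsTwoSidedI I) → listProd L ≤ M → ∃ P ∈ L, P ≤ M := by
  intro L
  induction L with
  | nil => intro _ h; exact absurd (top_le_iff.1 h) hM.2.1
  | cons I L ih =>
    intro hL h
    rcases hM.2.2 I (listProd L) (hL I (List.mem_cons_self)) (listProd_twoSided L)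
        (tmul_le.1 h) with h1 | h1
    · exact ⟨I, List.mem_cons_self, h1⟩
    · obtain ⟨P, hP, hPM⟩ := ih (fun J hJ => hL J (List.mem_cons_of_mem _ hJ)) h1
      exact ⟨P, List.mem_cons_of_mem _ hP, hPM⟩

theorem sup_twoSided {I J : Ideal R} (hI : IsTwoSidedI I) (hJ : IsTwoSidedI J) :
    IsTwoSidedI (I ⊔ J) := by
  intro x hx r
  obtain ⟨y, hy, z, hz, rfl⟩ := Submodule.mem_sup.1 hx
  exact Submodule.mem_sup.2 ⟨y * r, hI y hy r, z * r, hJ z hz r, (add_mul y z r).symm⟩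

/-- In a noetherian ring, every proper two-sided ideal contains a finite product of
prime two-sided ideals containing it. -/
theorem exists_primes [IsNoetherianRing R] (A : Ideal R) :
    IsTwoSidedI A → A ≠ ⊤ →
      ∃ L : List (Ideal R), (∀ P ∈ L, IsPrimeTS P ∧ A ≤ P) ∧ listProd L ≤ A := by
  induction A using IsNoetherian.induction with
  | _ A IH =>
    intro hA htop
    by_cases hp : IsPrimeTS A
    · refine ⟨[A], by simp [hp], ?_⟩
      show tmul A ⊤ ≤ A
      exact tmul_le.2 fun a ha b _ => hA a ha b
    · have h3 : ∃ I J : Ideal R, IsTwoSidedI I ∧ IsTwoSidedI J ∧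
          (∀ a ∈ I, ∀ b ∈ J, a * b ∈ A) ∧ ¬ I ≤ A ∧ ¬ J ≤ A := by
        by_contra hc
        exact hp ⟨hA, htop, fun I J hI hJ hmul => by
          by_contra hor
          push_neg at hor
          exact hc ⟨I, J, hI, hJ, hmul, hor.1, hor.2⟩⟩
      obtain ⟨I, J, hI, hJ, hmul, hIA, hJA⟩ := h3
      have hmul' : ∀ a ∈ A ⊔ I, ∀ b ∈ A ⊔ J, a * b ∈ A := by
        intro a ha b hb
        obtain ⟨a1, ha1, a2, ha2, rfl⟩ := Submodule.mem_sup.1 ha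
        obtain ⟨b1, hb1, b2, hb2, rfl⟩ := Submodule.mem_sup.1 hb
        have t1 : a1 * (b1 + b2) ∈ A := hA a1 ha1 _
        have t2 : a2 * b1 ∈ A := Ideal.mul_mem_left A a2 hb1
        have t3 : a2 * b2 ∈ A := hmul a2 ha2 b2 hb2
        rw [add_mul]
        exact add_mem t1 (by rw [mul_add]; exact add_mem t2 t3)
      have hI'top : A ⊔ I ≠ ⊤ := by
        intro h
        apply hJA
        intro b hb
        simpa using hmul' 1 (by rw [h]; trivial) b (Submodule.mem_sup_right hb)
      have hJ'top : A ⊔ J ≠ ⊤ := by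
        intro h
        apply hIA
        intro a ha
        simpa using hmul' a (Submodule.mem_sup_right ha) 1 (by rw [h]; trivial)
      have hltI : A < A ⊔ I :=
        lt_of_le_of_ne le_sup_left (fun h => hIA (by rw [h]; exact le_sup_right))
      have hltJ : A < A ⊔ J :=
        lt_of_le_of_ne le_sup_left (fun h => hJA (by rw [h]; exact le_sup_right))
      obtain ⟨L₁, hL₁, hL₁p⟩ := IH (A ⊔ I) hltI (sup_twoSided hA hI) hI'top
      obtain ⟨L₂, hL₂, hL₂p⟩ := IH (A ⊔ J) hltJ (sup_twoSided hA hJ) hJ'top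
      refine ⟨L₁ ++ L₂, ?_, ?_⟩
      · intro P hP
        rcases List.mem_append.1 hP with h | h
        · exact ⟨(hL₁ P h).1, le_trans le_sup_left (hL₁ P h).2⟩
        · exact ⟨(hL₂ P h).1, le_trans le_sup_left (hL₂ P h).2⟩
      · calc listProd (L₁ ++ L₂)
            ≤ tmul (listProd L₁) (listProd L₂) :=
              listProd_append_le _ _ (fun P hP => (hL₁ P hP).1.1)
          _ ≤ tmul (A ⊔ I) (A ⊔ J) := tmul_mono hL₁p hL₂p
          _ ≤ A := tmul_le.2 hmul'

variable {G : Type*} [Group G] [MulSemiringAction G R]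

theorem mem_gTrans {g : G} {I : Ideal R} {a : R} : a ∈ gTrans g I ↔ g • a ∈ I := Iff.rfl

theorem gTrans_gTrans (g h : G) (I : Ideal R) :
    gTrans g (gTrans h I) = gTrans (h * g) I := by
  ext a; simp [mem_gTrans, mul_smul]

theorem gTrans_one (I : Ideal R) : gTrans (1 : G) I = I := by
  ext a; simp [mem_gTrans]

theorem gTrans_mono {I J : Ideal R} (g : G) (h : I ≤ J) : gTrans g I ≤ gTrans g J :=
  fun _ ha => h ha

theorem gTrans_cancel (g : G) (I : Ideal R) : gTrans g⁻¹ (gTrans g I) = I := by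
  rw [gTrans_gTrans, mul_inv_cancel, gTrans_one]

theorem gTrans_cancel' (g : G) (I : Ideal R) : gTrans g (gTrans g⁻¹ I) = I := by
  rw [gTrans_gTrans, inv_mul_cancel, gTrans_one]

theorem gTrans_top (g : G) : gTrans g (⊤ : Ideal R) = ⊤ := by
  ext a; simp [mem_gTrans]

theorem gTrans_twoSided {I : Ideal R} (g : G) (h : IsTwoSidedI I) :
    IsTwoSidedI (gTrans g I) := by
  intro a ha r
  show g • (a * r) ∈ I
  rw [smul_mul']
  exact h _ ha _

theorem gTrans_prime {P : Ideal R} (g : G) (hP : IsPrimeTS P) : IsPrimeTS (gTrans g P) := by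
  refine ⟨gTrans_twoSided g hP.1, ?_, ?_⟩
  · intro h
    apply hP.2.1
    rw [← gTrans_cancel g P, h, gTrans_top]
  · intro I J hI hJ hmul
    have hmul' : ∀ a ∈ gTrans g⁻¹ I, ∀ b ∈ gTrans g⁻¹ J, a * b ∈ P := by
      intro a ha b hb
      have := hmul _ (mem_gTrans.1 ha) _ (mem_gTrans.1 hb)
      rw [mem_gTrans, smul_mul', smul_inv_smul, smul_inv_smul] at this
      exact this
    rcases hP.2.2 (gTrans g⁻¹ I) (gTrans g⁻¹ J) (gTrans_twoSided _ hI) (gTrans_twoSided _ hJ)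
        hmul' with h | h
    · left
      calc I = gTrans g (gTrans g⁻¹ I) := (gTrans_cancel' g I).symm
        _ ≤ gTrans g P := gTrans_mono g h
    · right
      calc J = gTrans g (gTrans g⁻¹ J) := (gTrans_cancel' g J).symm
        _ ≤ gTrans g P := gTrans_mono g h

theorem gTrans_tmul (g : G) (I J : Ideal R) :
    gTrans g (tmul I J) = tmul (gTrans g I) (gTrans g J) := by
  have hdir : ∀ (h : G) (I' J' : Ideal R),
      tmul (gTrans h I') (gTrans h J') ≤ gTrans h (tmul I' J') := by
    intro h I' J'
    refine tmul_le.2 fun a ha b hb => ?_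
    show h • (a * b) ∈ tmul I' J'
    rw [smul_mul']
    exact mem_tmul (mem_gTrans.1 ha) (mem_gTrans.1 hb)
  apply le_antisymm
  · have h2 := hdir g⁻¹ (gTrans g I) (gTrans g J)
    rw [gTrans_cancel, gTrans_cancel] at h2
    have h3 := gTrans_mono g h2
    rwa [gTrans_cancel'] at h3
  · exact hdir g I J

theorem listProd_GIdeal (L : List (Ideal R)) (h : ∀ I ∈ L, IsGIdeal G I) :
    IsGIdeal G (listProd L) := by
  induction L with
  | nil => exact ⟨top_twoSided, fun g => gTrans_top g⟩
  | cons I L ih =>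
    have hI := h I (List.mem_cons_self)
    have hL := ih (fun J hJ => h J (List.mem_cons_of_mem _ hJ))
    refine ⟨tmul_twoSided hL.1, fun g => ?_⟩
    show gTrans g (tmul I (listProd L)) = tmul I (listProd L)
    rw [gTrans_tmul, hI.2, hL.2]

theorem exists_le_of_listProd_le_G {Q : Ideal R} (hQtop : Q ≠ ⊤)
    (hsplit : ∀ I J : Ideal R, IsGIdeal G I → IsGIdeal G J →
      (∀ a ∈ I, ∀ b ∈ J, a * b ∈ Q) → I ≤ Q ∨ J ≤ Q) :
    ∀ L : List (Ideal R), (∀ I ∈ L, IsGIdeal G I) → listProd L ≤ Q → ∃ P ∈ L, P ≤ Q := by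
  intro L
  induction L with
  | nil => intro _ h; exact absurd (top_le_iff.1 h) hQtop
  | cons I L ih =>
    intro hL h
    rcases hsplit I (listProd L) (hL I (List.mem_cons_self))
        (listProd_GIdeal L fun J hJ => hL J (List.mem_cons_of_mem _ hJ))
        (tmul_le.1 h) with h1 | h1
    · exact ⟨I, List.mem_cons_self, h1⟩
    · obtain ⟨P, hP, hPQ⟩ := ih (fun J hJ => hL J (List.mem_cons_of_mem _ hJ)) h1
      exact ⟨P, List.mem_cons_of_mem _ hP, hPQ⟩

end Aux

/-- 1.12: if `G` has no proper subgroup of finite index, then every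
`G`-prime ideal of `R` is prime. -/
theorem stmt_6 {R : Type*} [Ring R] [IsNoetherianRing R] [IsNoetherianRing Rᵐᵒᵖ]
    (G : Type*) [Group G] [MulSemiringAction G R]
    (hG : ∀ K : Subgroup G, K.index ≠ 0 → K = ⊤) :
    ∀ Q : Ideal R, IsGPrime G Q → IsPrimeTS Q := by
  intro Q hQ
  obtain ⟨⟨hQ2, hQg⟩, hQtop, hQsplit⟩ := hQ
  obtain ⟨L, hL, hLp⟩ := exists_primes Q hQ2 hQtop
  have hLt : ∀ I ∈ L, IsTwoSidedI I := fun I hI => (hL I hI).1.1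
  -- the set of minimal primes over Q
  set 𝓜 : Set (Ideal R) :=
    {M | IsPrimeTS M ∧ Q ≤ M ∧ ∀ M', IsPrimeTS M' → Q ≤ M' → M' ≤ M → M' = M} with h𝓜
  have hcontain : ∀ M : Ideal R, IsPrimeTS M → Q ≤ M → ∃ P ∈ L, P ≤ M :=
    fun M hM hQM => exists_le_of_listProd_le hM L hLt (le_trans hLp hQM)
  have hsub : ∀ M ∈ 𝓜, M ∈ L := by
    intro M hM
    obtain ⟨P, hPL, hPM⟩ := hcontain M hM.1 hM.2.1
    have := hM.2.2 P (hL P hPL).1 (hL P hPL).2 hPM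
    rwa [← this]
  have hfin : 𝓜.Finite := Set.Finite.subset L.finite_toSet hsub
  -- every element of L contains a minimal prime over Q
  have hminbelow : ∀ P ∈ L, ∃ M ∈ 𝓜, M ≤ P := by
    intro P hP
    have hsfin : {P' | P' ∈ L ∧ P' ≤ P}.Finite :=
      L.finite_toSet.subset (fun x hx => hx.1)
    obtain ⟨m, hm, hmmin⟩ :=
      (show ∃ m ∈ {P' | P' ∈ L ∧ P' ≤ P}, ∀ a' ∈ {P' | P' ∈ L ∧ P' ≤ P}, a' ≤ m → m = a' from by
        obtain ⟨m, hm1, hm2⟩ := hsfin.exists_minimal ⟨P, hP, le_rfl⟩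
        exact ⟨m, hm1, fun a' ha' h => le_antisymm (hm2 ha' h) h⟩)
    refine ⟨m, ⟨(hL m hm.1).1, (hL m hm.1).2, ?_⟩, hm.2⟩
    intro M' hM' hQM' hM'm
    obtain ⟨P', hP'L, hP'M'⟩ := hcontain M' hM' hQM'
    have hP'm : P' ≤ m := le_trans hP'M' hM'm
    have hP's : P' ∈ {P' | P' ∈ L ∧ P' ≤ P} := ⟨hP'L, le_trans hP'm hm.2⟩
    have hmeq : m = P' := hmmin P' hP's hP'm
    exact le_antisymm hM'm (by rw [hmeq]; exact hP'M')
  -- 𝓜 is G-stable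
  have hstep3 : ∀ g : G, ∀ M ∈ 𝓜, gTrans g M ∈ 𝓜 := by
    intro g M hM
    refine ⟨gTrans_prime g hM.1, ?_, ?_⟩
    · calc Q = gTrans g Q := (hQg g).symm
        _ ≤ gTrans g M := gTrans_mono g hM.2.1
    · intro M' hM' hQM' hle
      have h1 : gTrans g⁻¹ M' = M := by
        refine hM.2.2 _ (gTrans_prime g⁻¹ hM') ?_ ?_
        · calc Q = gTrans g⁻¹ Q := (hQg g⁻¹).symm
            _ ≤ gTrans g⁻¹ M' := gTrans_mono _ hQM'
        · have := gTrans_mono g⁻¹ hle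
          rwa [gTrans_cancel] at this
      calc M' = gTrans g (gTrans g⁻¹ M') := (gTrans_cancel' g M').symm
        _ = gTrans g M := by rw [h1]
  -- every minimal prime over Q is a G-ideal
  have hstab : ∀ M ∈ 𝓜, ∀ g : G, gTrans g M = M := by
    intro M hM
    let H : Subgroup G :=
      { carrier := {g | gTrans g M = M}
        one_mem' := gTrans_one M
        mul_mem' := by
          intro a b ha hb
          show gTrans (a * b) M = M
          calc gTrans (a * b) M = gTrans b (gTrans a M) := (gTrans_gTrans b a M).symm
            _ = gTrans b M := by rw [ha]
            _ = M := hb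
        inv_mem' := by
          intro a ha
          show gTrans a⁻¹ M = M
          calc gTrans a⁻¹ M = gTrans a⁻¹ (gTrans a M) := by rw [ha]
            _ = M := gTrans_cancel a M }
    have hresp : ∀ a b : G, QuotientGroup.leftRel H a b →
        gTrans a⁻¹ M = gTrans b⁻¹ M := by
      intro a b hab
      have hab' : gTrans (a⁻¹ * b) M = M := QuotientGroup.leftRel_apply.mp hab
      calc gTrans a⁻¹ M = gTrans ((a⁻¹ * b) * b⁻¹) M := by rw [mul_inv_cancel_right]
        _ = gTrans b⁻¹ (gTrans (a⁻¹ * b) M) := (gTrans_gTrans b⁻¹ (a⁻¹ * b) M).symm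
        _ = gTrans b⁻¹ M := by rw [hab']
    let f : G ⧸ H → Ideal R := Quotient.lift (fun g : G => gTrans g⁻¹ M) hresp
    have hfinj : Function.Injective f := by
      intro x y
      refine Quotient.inductionOn₂ x y ?_
      intro a b hab
      have hab' : gTrans a⁻¹ M = gTrans b⁻¹ M := hab
      refine Quotient.sound (QuotientGroup.leftRel_apply.mpr ?_)
      show gTrans (a⁻¹ * b) M = M
      calc gTrans (a⁻¹ * b) M = gTrans b (gTrans a⁻¹ M) := (gTrans_gTrans b a⁻¹ M).symm
        _ = gTrans b (gTrans b⁻¹ M) := by rw [hab']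
        _ = M := gTrans_cancel' b M
    have hmem : ∀ x : G ⧸ H, f x ∈ 𝓜 := by
      refine Quotient.ind ?_
      intro g
      exact hstep3 g⁻¹ M hM
    have : Finite ↥𝓜 := hfin.to_subtype
    have hfinq : Finite (G ⧸ H) :=
      Finite.of_injective (fun x => (⟨f x, hmem x⟩ : ↥𝓜))
        (fun x y h => hfinj (congrArg Subtype.val h))
    have hidx : H.index ≠ 0 := Subgroup.index_ne_zero_of_finite
    have hHtop := hG H hidx
    intro g
    have hg : g ∈ H := by rw [hHtop]; exact Subgroup.mem_top g
    exact hg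
  -- choose a list of minimal primes below the primes in L
  have key : ∀ Lx : List (Ideal R), (∀ P ∈ Lx, P ∈ L) →
      ∃ L' : List (Ideal R), List.Forall₂ (· ≤ ·) L' Lx ∧ ∀ M ∈ L', M ∈ 𝓜 := by
    intro Lx
    induction Lx with
    | nil => exact fun _ => ⟨[], List.Forall₂.nil, by simp⟩
    | cons P Lx ih =>
      intro h
      obtain ⟨L', h1, h2⟩ := ih (fun P' hP' => h P' (List.mem_cons_of_mem _ hP'))
      obtain ⟨M, hM, hMP⟩ := hminbelow P (h P (List.mem_cons_self))
      refine ⟨M :: L', List.Forall₂.cons hMP h1, ?_⟩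
      intro M' hM'
      rcases List.mem_cons.1 hM' with h | h
      · exact h ▸ hM
      · exact h2 M' h
  obtain ⟨L', hF2, hL'𝓜⟩ := key L (fun _ h => h)
  have hL'Q : listProd L' ≤ Q := le_trans (listProd_le_listProd hF2) hLp
  have hGideals : ∀ M ∈ L', IsGIdeal G M := fun M hM =>
    ⟨(hL'𝓜 M hM).1.1, hstab M (hL'𝓜 M hM)⟩
  obtain ⟨M, hML', hMQ⟩ := exists_le_of_listProd_le_G hQtop hQsplit L' hGideals hL'Q
  have hQM : Q ≤ M := (hL'𝓜 M hML').2.1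
  have hQeq : Q = M := le_antisymm hQM hMQ
  rw [hQeq]
  exact (hL'𝓜 M hML').1
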